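/- arXiv:1311.1479 — 4 statements merged into one kernel-verified Lean document; each statement's English description precedes it below -/
import Mathlib

section
/- The Heisenberg surface X in affine 3-space over F_{p^2}, cut out by x - x^p + y z^p - z y^p = 0, contains every line of the form {(a,b,0) + t(b^p, v, 1) : t ∈ F_{p^2}} where a, v ∈ F_p and b ∈ F_{p^2}. -/
/-- The Heisenberg surface `x - x^p + y z^p - z y^p = 0` over `F_{p^2}` contains every
line `{(a,b,0) + t (b^p, v, 1)}` with `a, v ∈ F_p` (i.e. fixed by Frobenius) and `b ∈ F_{p^2}`. -/
theorem heisenberg_contains_lines (p : ℕ) [Fact p.Prime]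
    (a v b : GaloisField p 2) (ha : a ^ p = a) (hv : v ^ p = v)
    (t : GaloisField p 2) :
    (a + t * b ^ p) - (a + t * b ^ p) ^ p
      + (b + t * v) * t ^ p - t * (b + t * v) ^ p = 0 := by
  haveI : CharP (GaloisField p 2) p := inferInstance
  haveI : Fintype (GaloisField p 2) := Fintype.ofFinite _
  have hcard : Fintype.card (GaloisField p 2) = p ^ 2 := by
    rw [← Nat.card_eq_fintype_card]; exact GaloisField.card p 2 two_ne_zero
  have hb2 : (b ^ p) ^ p = b := by
    rw [← pow_mul, ← sq, ← hcard, FiniteField.pow_card]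
  rw [add_pow_char, add_pow_char, mul_pow, mul_pow, hb2, ha, hv]
  ring
end

section
/- The number of F_{p^2}-rational points on the Heisenberg surface {(x,y,z) : x - x^p + y z^p - z y^p = 0} is exactly p^5. -/
open Polynomial

section Aux

variable (p : ℕ) [Fact p.Prime]

local notation "F" => GaloisField p 2

private noncomputable def heisPhi : F →+ F :=
  AddMonoidHom.mk' (fun x => x ^ p - x) (by
    intro a b
    simp only [add_pow_char]
    ring)

private lemma heis_roots_le (a c : F) :
    {x : F | x ^ p + a * x + c = 0}.ncard ≤ p := by
  have hp : 0 < p := (Fact.out : p.Prime).pos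
  have h1 : 1 < p := (Fact.out : p.Prime).one_lt
  classical
  set q : F[X] := X ^ p + C a * X + C c with hq
  have hdeg : ∀ n, p < n → q.coeff n = 0 := by
    intro n hn
    simp [hq, coeff_X, coeff_C, (h1.trans hn).ne, (h1.trans hn).ne', (hp.trans hn).ne', hn.ne']
  have hqne : q ≠ 0 := by
    intro h
    have : q.coeff p = 0 := by rw [h]; simp
    have h2 : q.coeff p = 1 := by
      simp [hq, coeff_X, coeff_C, hp.ne', h1.ne]
    rw [h2] at this
    exact one_ne_zero this
  have hsub : {x : F | x ^ p + a * x + c = 0} ⊆ ↑q.roots.toFinset := by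
    intro x hx
    simp only [Multiset.mem_toFinset, Finset.mem_coe]
    rw [mem_roots hqne]
    simpa [hq, IsRoot] using hx
  calc {x : F | x ^ p + a * x + c = 0}.ncard ≤ (↑q.roots.toFinset : Set F).ncard :=
        Set.ncard_le_ncard hsub (Set.Finite.ofFinset q.roots.toFinset (by simp))
    _ = q.roots.toFinset.card := by rw [Set.ncard_coe_finset]
    _ ≤ Multiset.card q.roots := q.roots.toFinset_card_le
    _ ≤ q.natDegree := q.card_roots'
    _ ≤ p := natDegree_le_iff_coeff_eq_zero.mpr hdeg

private lemma heis_ker_card : Nat.card {x : F // x ^ p - x = 0} = p := by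
  have hle : Nat.card {x : F // x ^ p - x = 0} ≤ p := by
    rw [show {x : F // x ^ p - x = 0} = ↥{x : F | x ^ p - x = 0} from rfl,
      Nat.card_coe_set_eq]
    have : {x : F | x ^ p - x = 0} = {x : F | x ^ p + (-1) * x + 0 = 0} := by
      ext x; constructor <;> intro h <;> simp at * <;> linear_combination h
    rw [this]
    exact heis_roots_le p (-1) 0
  have hge : p ≤ Nat.card {x : F // x ^ p - x = 0} := by
    have hf : Function.Injective
        (fun z : ZMod p => (⟨algebraMap (ZMod p) F z, by
          rw [← map_pow, ZMod.pow_card, sub_self]⟩ : {x : F // x ^ p - x = 0})) := by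
      intro a b hab
      exact (algebraMap (ZMod p) F).injective (congrArg Subtype.val hab)
    calc p = Nat.card (ZMod p) := by simp [Nat.card_eq_fintype_card]
      _ ≤ _ := Nat.card_le_card_of_injective _ hf
  omega

private lemma heis_fiber_card (c : F) (hc : c ^ p = -c) :
    Nat.card {x : F // x ^ p - x = c} = p := by
  have hp : 0 < p := (Fact.out : p.Prime).pos
  have hcF : Nat.card F = p ^ 2 := GaloisField.card p 2 (by norm_num)
  have hpp : ∀ t : F, (t ^ p) ^ p = t := by
    intro t
    letI : Fintype F := Fintype.ofFinite F
    have h : t ^ Fintype.card F = t := FiniteField.pow_card t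
    rw [← Nat.card_eq_fintype_card, hcF, pow_two p, pow_mul] at h
    exact h
  have hker : Nat.card (heisPhi p).ker = p := by
    have h : ((heisPhi p).ker : Set F) = {x : F | x ^ p - x = 0} := by
      ext x; simp [heisPhi, AddMonoidHom.mem_ker]
    rw [show (Nat.card (heisPhi p).ker : ℕ) = Nat.card {x : F // x ^ p - x = 0} from
      Nat.card_congr (Equiv.setCongr h)]
    exact heis_ker_card p
  have hrange : Nat.card (heisPhi p).range = p := by
    have h1 : Nat.card F = Nat.card (F ⧸ (heisPhi p).ker) * Nat.card (heisPhi p).ker :=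
      AddSubgroup.card_eq_card_quotient_mul_card_addSubgroup _
    have h2 : Nat.card (F ⧸ (heisPhi p).ker) = Nat.card (heisPhi p).range :=
      Nat.card_congr (QuotientAddGroup.quotientKerEquivRange (heisPhi p)).toEquiv
    rw [h2, hker, hcF] at h1
    have h3 : p * p = Nat.card (heisPhi p).range * p := by rw [← h1]; ring
    exact (Nat.eq_of_mul_eq_mul_right hp h3).symm
  set V : Set F := {t : F | t ^ p + 1 * t + 0 = 0} with hV
  have hVsub : ((heisPhi p).range : Set F) ⊆ V := by
    rintro t ⟨x, rfl⟩
    show (x ^ p - x) ^ p + 1 * (x ^ p - x) + 0 = 0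
    have hsp : (x ^ p - x) ^ p = x - x ^ p := by
      rw [sub_pow_char, hpp x]
    rw [hsp]
    ring
  have hVeq : ((heisPhi p).range : Set F) = V := by
    apply Set.eq_of_subset_of_ncard_le hVsub
    have hr' : ((heisPhi p).range : Set F).ncard = p := by
      rw [← Nat.card_coe_set_eq]; exact hrange
    rw [hr']
    exact heis_roots_le p 1 0
  -- c ∈ range
  have hcV : c ∈ V := by simp [hV]; linear_combination hc
  rw [← hVeq] at hcV
  obtain ⟨x0, hx0⟩ := hcV
  have hx0' : x0 ^ p - x0 = c := hx0
  -- fiber ≃ kernel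
  have e : {x : F // x ^ p - x = c} ≃ {x : F // x ^ p - x = 0} :=
    { toFun := fun x => ⟨x.1 - x0, by
        rw [sub_pow_char]
        linear_combination x.2 - hx0'⟩
      invFun := fun y => ⟨y.1 + x0, by
        rw [add_pow_char]
        linear_combination y.2 + hx0'⟩
      left_inv := fun x => by simp
      right_inv := fun y => by simp }
  rw [Nat.card_congr e]
  exact heis_ker_card p

end Aux

/-- The Heisenberg surface `x - x^p + y z^p - z y^p = 0` has exactly `p^5` points
over `F_{p^2}`. -/
theorem heisenberg_card (p : ℕ) [Fact p.Prime] :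
    Nat.card {w : GaloisField p 2 × GaloisField p 2 × GaloisField p 2 //
      w.1 - w.1 ^ p + w.2.1 * w.2.2 ^ p - w.2.2 * w.2.1 ^ p = 0} = p ^ 5 := by
  classical
  set F := GaloisField p 2
  have hcF : Nat.card F = p ^ 2 := GaloisField.card p 2 (by norm_num)
  have hpp : ∀ t : F, (t ^ p) ^ p = t := by
    intro t
    letI : Fintype F := Fintype.ofFinite F
    have h : t ^ Fintype.card F = t := FiniteField.pow_card t
    rw [← Nat.card_eq_fintype_card, hcF, pow_two p, pow_mul] at h
    exact h
  set B : F × F → F := fun yz => yz.1 * yz.2 ^ p - yz.2 * yz.1 ^ p with hB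
  have e : {w : F × F × F //
      w.1 - w.1 ^ p + w.2.1 * w.2.2 ^ p - w.2.2 * w.2.1 ^ p = 0}
      ≃ Σ yz : F × F, {x : F // x ^ p - x = B yz} :=
    { toFun := fun w => ⟨w.1.2, ⟨w.1.1, by
        have := w.2
        simp only [hB]
        linear_combination -this⟩⟩
      invFun := fun s => ⟨(s.2.1, s.1.1, s.1.2), by
        have := s.2.2
        simp only [hB] at this
        dsimp only
        linear_combination -this⟩
      left_inv := fun w => rfl
      right_inv := fun s => rfl }
  rw [Nat.card_congr e]
  letI : ∀ yz : F × F, Fintype {x : F // x ^ p - x = B yz} := fun yz =>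
    Fintype.ofFinite _
  letI : Fintype F := Fintype.ofFinite _
  rw [Nat.card_eq_fintype_card, Fintype.card_sigma]
  have hfiber : ∀ yz : F × F, Fintype.card {x : F // x ^ p - x = B yz} = p := by
    intro yz
    rw [← Nat.card_eq_fintype_card]
    apply heis_fiber_card
    obtain ⟨y, z⟩ := yz
    have hBp : (y * z ^ p - z * y ^ p) ^ p
        = y ^ p * z - z ^ p * y := by
      rw [sub_pow_char, mul_pow, mul_pow, hpp z, hpp y]
    simp only [hB]
    rw [hBp]
    ring
  simp only [hfiber, Finset.sum_const, Finset.card_univ, smul_eq_mul]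
  rw [Fintype.card_prod, ← Nat.card_eq_fintype_card, hcF]
  ring
end

section
/- A plane curve of degree d over a finite field F has at most d(|F| + 1) rational points. -/
open MvPolynomial
open scoped LinearAlgebra.Projectivization

namespace PlaneCurveAux

variable {F : Type*} [Field F]

lemma sum_fin_eq_of_mem_support {σ : Type*} [Fintype σ] {P : MvPolynomial σ F} {d : ℕ}
    (hd : P.IsHomogeneous d) {m : σ →₀ ℕ} (hm : m ∈ P.support) : ∑ i, m i = d := by
  have h1 : (Finsupp.weight (1 : σ → ℕ)) m = d := hd (MvPolynomial.mem_support_iff.mp hm)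
  rw [show (Finsupp.weight (1 : σ → ℕ)) = Finsupp.weight (fun _ => 1) from rfl,
    ← Finsupp.degree_eq_weight_one] at h1
  rw [← h1, Finsupp.degree]
  exact (Finset.sum_subset (Finset.subset_univ _)
    (fun i _ hi => Finsupp.notMem_support_iff.mp hi)).symm

lemma eval_smul_homog {σ : Type*} [Fintype σ] {P : MvPolynomial σ F} {d : ℕ}
    (hd : P.IsHomogeneous d) (a : F) (v : σ → F) :
    eval (a • v) P = a ^ d * eval v P := by
  rw [eval_eq', eval_eq', Finset.mul_sum]
  refine Finset.sum_congr rfl fun m hm => ?_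
  have h := sum_fin_eq_of_mem_support hd hm
  calc coeff m P * ∏ i, (a • v) i ^ m i
      = coeff m P * ((∏ i, a ^ m i) * ∏ i, v i ^ m i) := by
        rw [← Finset.prod_mul_distrib]
        simp [mul_pow]
    _ = a ^ d * (coeff m P * ∏ i, v i ^ m i) := by
        rw [Finset.prod_pow_eq_pow_sum, h]; ring

lemma nat_fact1 (q : ℕ) (h : 2 ≤ q) : q ^ 2 - 1 ≤ (q - 1) * (q + 1) := by
  obtain ⟨r, rfl⟩ := Nat.exists_eq_add_of_le h
  have e1 : (2 + r) ^ 2 = r ^ 2 + 4 * r + 4 := by ring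
  have e2 : (2 + r - 1) * (2 + r + 1) = r ^ 2 + 4 * r + 3 := by
    rw [show 2 + r - 1 = r + 1 by omega]; ring
  rw [e1, e2]
  generalize r ^ 2 = b
  omega

lemma nat_fact2 (q d : ℕ) (h : 2 ≤ q) (hd : q + 1 ≤ d) :
    q ^ 3 - 1 ≤ (q - 1) * (d * (q + 1)) := by
  obtain ⟨r, rfl⟩ := Nat.exists_eq_add_of_le h
  obtain ⟨s, rfl⟩ := Nat.exists_eq_add_of_le hd
  have e1 : (2 + r) ^ 3 = r ^ 3 + 6 * r ^ 2 + 12 * r + 8 := by ring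
  have e2 : (2 + r - 1) * ((2 + r + 1 + s) * (2 + r + 1))
      = r ^ 3 + 7 * r ^ 2 + 15 * r + 9 + (r ^ 2 * s + 4 * (r * s) + 3 * s) := by
    rw [show 2 + r - 1 = r + 1 by omega]; ring
  rw [e1, e2]
  generalize r ^ 3 = a
  generalize r ^ 2 * s = c
  generalize r * s = e
  generalize r ^ 2 = b
  omega

lemma degC_add_X_mul_C_le (w v : Fin 3 → F) (i : Fin 3) :
    (Polynomial.C (w i) + Polynomial.X * Polynomial.C (v i)).natDegree ≤ 1 := by
  refine (Polynomial.natDegree_add_le _ _).trans (max_le (by simp) ?_)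
  exact Polynomial.natDegree_mul_le.trans (by simp)

noncomputable def linePoly (P : MvPolynomial (Fin 3) F) (v w : Fin 3 → F) : Polynomial F :=
  eval₂ Polynomial.C (fun i => Polynomial.C (w i) + Polynomial.X * Polynomial.C (v i)) P

lemma linePoly_eval (P : MvPolynomial (Fin 3) F) (v w : Fin 3 → F) (t : F) :
    (linePoly P v w).eval t = eval (w + t • v) P := by
  have h := MvPolynomial.eval₂_comp_left (Polynomial.evalRingHom t) Polynomial.C
      (fun i => Polynomial.C (w i) + Polynomial.X * Polynomial.C (v i)) P
  simp only [Polynomial.coe_evalRingHom] at h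
  rw [linePoly, h, ← eval₂_id]
  congr 1
  · ext a; simp
  · funext i
    simp [Polynomial.eval_add, Polynomial.eval_mul, mul_comm t]

lemma linePoly_natDegree_le {P : MvPolynomial (Fin 3) F} {d : ℕ}
    (hd : P.IsHomogeneous d) (v w : Fin 3 → F) :
    (linePoly P v w).natDegree ≤ d := by
  rw [linePoly, eval₂_eq']
  refine Polynomial.natDegree_sum_le_of_forall_le _ _ fun m hm => ?_
  refine Polynomial.natDegree_mul_le.trans ?_
  have h1 : (Polynomial.C (coeff m P)).natDegree = 0 := Polynomial.natDegree_C _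
  rw [h1, zero_add]
  refine Polynomial.natDegree_prod_le _ _ |>.trans ?_
  rw [← sum_fin_eq_of_mem_support hd hm]
  refine Finset.sum_le_sum fun i _ => ?_
  refine Polynomial.natDegree_pow_le.trans ?_
  have : (Polynomial.C (w i) + Polynomial.X * Polynomial.C (v i)).natDegree ≤ 1 :=
    degC_add_X_mul_C_le w v i
  calc m i * (Polynomial.C (w i) + Polynomial.X * Polynomial.C (v i)).natDegree
      ≤ m i * 1 := Nat.mul_le_mul_left _ this
    _ = m i := mul_one _

lemma linePoly_coeff {P : MvPolynomial (Fin 3) F} {d : ℕ}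
    (hd : P.IsHomogeneous d) (v w : Fin 3 → F) :
    (linePoly P v w).coeff d = eval v P := by
  rw [linePoly, eval₂_eq', eval_eq', Polynomial.finset_sum_coeff]
  refine Finset.sum_congr rfl fun m hm => ?_
  rw [Polynomial.coeff_C_mul]
  congr 1
  set f : Fin 3 → Polynomial F := fun i => Polynomial.C (w i) + Polynomial.X * Polynomial.C (v i)
    with hf
  have hdeg : ∀ i, (f i).natDegree ≤ 1 := fun i => degC_add_X_mul_C_le w v i
  have hdegp : ∀ i, (f i ^ m i).natDegree ≤ m i := fun i =>
    Polynomial.natDegree_pow_le.trans (by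
      calc m i * (f i).natDegree ≤ m i * 1 := Nat.mul_le_mul_left _ (hdeg i)
        _ = m i := mul_one _)
  have hc1 : ∀ i, (f i).coeff 1 = v i := fun i => by simp [hf]
  have hcp : ∀ i, (f i ^ m i).coeff (m i) = v i ^ m i := fun i => by
    have := Polynomial.coeff_pow_of_natDegree_le (hdeg i) (m := m i)
    rw [mul_one] at this
    rw [this, hc1]
  have hsum := sum_fin_eq_of_mem_support hd hm
  rw [← hsum, Fin.sum_univ_three, Fin.prod_univ_three, Fin.prod_univ_three]
  rw [Polynomial.coeff_mul_add_eq_of_natDegree_le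
      (Polynomial.natDegree_mul_le.trans (add_le_add (hdegp 0) (hdegp 1))) (hdegp 2),
    Polynomial.coeff_mul_add_eq_of_natDegree_le (hdegp 0) (hdegp 1), hcp, hcp, hcp]


lemma affine_bound (F : Type*) [Field F] [Fintype F]
    (P : MvPolynomial (Fin 3) F) (hP : P ≠ 0) (d : ℕ) (hd : P.IsHomogeneous d) :
    {v : Fin 3 → F | v ≠ 0 ∧ eval v P = 0}.ncard ≤
      (Fintype.card F - 1) * (d * (Fintype.card F + 1)) := by
  classical
  have hq2 : 2 ≤ Fintype.card F := Fintype.one_lt_card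
  by_cases hd0 : d = 0
  · subst hd0
    have hC : P = MvPolynomial.C (MvPolynomial.coeff 0 P) := by
      ext m
      rcases eq_or_ne m 0 with rfl | hm
      · simp
      · rw [hd.coeff_eq_zero (by rwa [Ne, Finsupp.degree_eq_zero_iff]),
          MvPolynomial.coeff_C, if_neg (Ne.symm hm)]
    have hc0 : MvPolynomial.coeff 0 P ≠ 0 := fun h => hP (by rw [hC, h, map_zero])
    have hempty : {v : Fin 3 → F | v ≠ 0 ∧ eval v P = 0} = ∅ := by
      ext v
      simp only [Set.mem_setOf_eq, Set.mem_empty_iff_false, iff_false, not_and]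
      intro _ hv
      rw [hC] at hv
      simp only [MvPolynomial.eval_C] at hv
      exact hc0 hv
    rw [hempty]
    simp
  rcases le_or_gt d (Fintype.card F) with hdq | hdq
  · -- main case : d ≤ q, pencil of lines argument
    obtain ⟨v₀, hv₀⟩ : ∃ v₀ : Fin 3 → F, eval v₀ P ≠ 0 := by
      by_contra h
      push_neg at h
      refine hP (hd.eq_zero_of_forall_eval_eq_zero_of_le_card h ?_)
      rw [Cardinal.mk_fintype]
      exact_mod_cast Nat.cast_le.mpr hdq
    have hv0ne : v₀ ≠ 0 := by
      rintro rfl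
      apply hv₀
      have h0 : (0 : Fin 3 → F) = (0 : F) • (0 : Fin 3 → F) := by simp
      rw [h0, eval_smul_homog hd, zero_pow hd0, zero_mul]
    obtain ⟨i₀, hi₀⟩ := Function.ne_iff.mp hv0ne
    have hi₀' : v₀ i₀ ≠ 0 := by simpa using hi₀
    set c : F := (v₀ i₀)⁻¹ with hc
    have hcv : c * v₀ i₀ = 1 := inv_mul_cancel₀ hi₀'
    set Φ : (Fin 3 → F) → (Fin 3 → F) × F := fun u => (u - (u i₀ * c) • v₀, u i₀ * c) with hΦ
    have hrecon : ∀ u : Fin 3 → F, u = (Φ u).1 + (Φ u).2 • v₀ := fun u => by simp [hΦ]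
    have hΦinj : Function.Injective Φ := by
      intro u u' h
      rw [hrecon u, hrecon u', h]
    set K₀ : Finset (Fin 3 → F) :=
      (Finset.univ.filter fun w : Fin 3 → F => w i₀ = 0).erase 0 with hK₀
    have hWcard : (Finset.univ.filter fun w : Fin 3 → F => w i₀ = 0).card * Fintype.card F
        = Fintype.card F ^ 3 := by
      rw [← Fintype.card_subtype, ← Fintype.card_prod]
      have e : {w : Fin 3 → F // w i₀ = 0} × F ≃ (Fin 3 → F) :=
        { toFun := fun p => p.1.1 + p.2 • (Pi.single i₀ 1 : Fin 3 → F)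
          invFun := fun u => (⟨u - u i₀ • (Pi.single i₀ 1 : Fin 3 → F), by simp⟩, u i₀)
          left_inv := by
            rintro ⟨⟨w, hw⟩, t⟩
            have ht : (w + t • (Pi.single i₀ 1 : Fin 3 → F)) i₀ = t := by simp [hw]
            refine Prod.ext (Subtype.ext ?_) ht
            simp only [ht]
            exact add_sub_cancel_right _ _
          right_inv := fun u => by simp }
      rw [Fintype.card_congr e, Fintype.card_fun, Fintype.card_fin]
    have hK₀card : K₀.card ≤ (Fintype.card F - 1) * (Fintype.card F + 1) := by
      have h0mem : (0 : Fin 3 → F) ∈ Finset.univ.filter fun w : Fin 3 → F => w i₀ = 0 := by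
        simp
      rw [hK₀, Finset.card_erase_of_mem h0mem]
      have hW : (Finset.univ.filter fun w : Fin 3 → F => w i₀ = 0).card
          = Fintype.card F ^ 2 := by
        have hpos : 0 < Fintype.card F := Fintype.card_pos
        have h3 : Fintype.card F ^ 3 = Fintype.card F ^ 2 * Fintype.card F := by ring
        rw [h3] at hWcard
        exact Nat.eq_of_mul_eq_mul_right hpos hWcard
      rw [hW]
      exact nat_fact1 _ hq2
    set g : (Fin 3 → F) → Polynomial F := fun w => linePoly P v₀ w with hg
    have hgne : ∀ w, g w ≠ 0 := by
      intro w h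
      apply hv₀
      rw [← linePoly_coeff hd v₀ w, show linePoly P v₀ w = g w from rfl, h,
        Polynomial.coeff_zero]
    set B : Finset ((Fin 3 → F) × F) :=
      K₀.biUnion (fun w => {w} ×ˢ (g w).roots.toFinset) with hB
    have hsub : Φ '' {v : Fin 3 → F | v ≠ 0 ∧ eval v P = 0} ⊆ ↑B := by
      rintro _ ⟨u, ⟨hu0, huP⟩, rfl⟩
      have hw0 : (Φ u).1 i₀ = 0 := by
        show u i₀ - u i₀ * c * v₀ i₀ = 0
        rw [mul_assoc, hcv, mul_one, sub_self]
      have hwne : (Φ u).1 ≠ 0 := by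
        intro h
        have hu : u = (u i₀ * c) • v₀ := by
          conv_lhs => rw [hrecon u]
          rw [h, zero_add]
        have heval : eval ((u i₀ * c) • v₀) P = 0 := by rw [← hu]; exact huP
        rw [eval_smul_homog hd] at heval
        rcases mul_eq_zero.mp heval with h1 | h1
        · have ht0 : u i₀ * c = 0 := pow_eq_zero_iff hd0 |>.mp h1
          apply hu0
          rw [hu, ht0, zero_smul]
        · exact hv₀ h1
      have hroot : (Φ u).2 ∈ (g (Φ u).1).roots.toFinset := by
        rw [Multiset.mem_toFinset, Polynomial.mem_roots']
        refine ⟨hgne _, ?_⟩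
        show Polynomial.eval ((Φ u).2) (g (Φ u).1) = 0
        rw [show g (Φ u).1 = linePoly P v₀ (Φ u).1 from rfl, linePoly_eval, ← hrecon u]
        exact huP
      rw [Finset.coe_biUnion]
      refine Set.mem_biUnion (show (Φ u).1 ∈ (K₀ : Set (Fin 3 → F)) from ?_) ?_
      · rw [Finset.mem_coe, hK₀, Finset.mem_erase]
        refine ⟨hwne, ?_⟩
        rw [Finset.mem_filter]
        exact ⟨Finset.mem_univ _, hw0⟩
      · rw [Finset.mem_coe, Finset.mem_product]
        exact ⟨Finset.mem_singleton_self _, hroot⟩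
    have hTcard : {v : Fin 3 → F | v ≠ 0 ∧ eval v P = 0}.ncard ≤ B.card := by
      rw [← Set.ncard_coe_finset, ← Set.ncard_image_of_injective _ hΦinj]
      exact Set.ncard_le_ncard hsub (Finset.finite_toSet B)
    have hBcard : B.card ≤ K₀.card * d := by
      have hle : ∀ w ∈ K₀, (({w} : Finset (Fin 3 → F)) ×ˢ (g w).roots.toFinset).card ≤ d := by
        intro w _
        rw [Finset.card_product, Finset.card_singleton, one_mul]
        exact (Multiset.toFinset_card_le _).trans
          ((Polynomial.card_roots' _).trans (linePoly_natDegree_le hd v₀ w))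
      calc B.card ≤ ∑ w ∈ K₀, (({w} : Finset (Fin 3 → F)) ×ˢ (g w).roots.toFinset).card :=
            Finset.card_biUnion_le
        _ ≤ K₀.card • d := Finset.sum_le_card_nsmul _ _ _ hle
        _ = K₀.card * d := by rw [smul_eq_mul]
    calc {v : Fin 3 → F | v ≠ 0 ∧ eval v P = 0}.ncard ≤ B.card := hTcard
      _ ≤ K₀.card * d := hBcard
      _ ≤ ((Fintype.card F - 1) * (Fintype.card F + 1)) * d :=
          Nat.mul_le_mul_right _ hK₀card
      _ = (Fintype.card F - 1) * (d * (Fintype.card F + 1)) := by ring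
  · -- d > q : trivial bound by the total number of nonzero vectors
    have hsub : {v : Fin 3 → F | v ≠ 0 ∧ eval v P = 0} ⊆ ({(0 : Fin 3 → F)}ᶜ : Set _) :=
      fun v hv => hv.1
    have h1 := Set.ncard_le_ncard hsub (Set.toFinite _)
    have h2 : ({(0 : Fin 3 → F)}ᶜ : Set _).ncard = Fintype.card F ^ 3 - 1 := by
      rw [Set.compl_eq_univ_diff, Set.ncard_diff_singleton_of_mem (Set.mem_univ _),
        Set.ncard_univ, Nat.card_eq_fintype_card, Fintype.card_fun, Fintype.card_fin]
    refine (h1.trans h2.le).trans ?_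
    exact nat_fact2 _ _ hq2 hdq

end PlaneCurveAux

open PlaneCurveAux

/-- A plane projective curve of degree `d` over a finite field `F` has at most
`d(|F|+1)` rational points. -/
theorem plane_curve_point_bound (F : Type*) [Field F] [Fintype F]
    (P : MvPolynomial (Fin 3) F) (hP : P ≠ 0) (d : ℕ) (hd : P.IsHomogeneous d) :
    {x : ℙ F (Fin 3 → F) | eval x.rep P = 0}.ncard ≤ d * (Fintype.card F + 1) := by
  classical
  have hq2 : 2 ≤ Fintype.card F := Fintype.one_lt_card
  set S : Set (ℙ F (Fin 3 → F)) := {x | eval x.rep P = 0} with hS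
  set T : Set (Fin 3 → F) := {v | v ≠ 0 ∧ eval v P = 0} with hT
  -- Step 1 : Nat.card T = (q - 1) * S.ncard
  have hfb : Function.Bijective (fun p : Fˣ × S =>
      (⟨(p.1 : F) • p.2.1.rep, by
        refine ⟨smul_ne_zero p.1.ne_zero (Projectivization.rep_nonzero _), ?_⟩
        rw [eval_smul_homog hd]
        have h0 : eval p.2.1.rep P = 0 := p.2.2
        rw [h0, mul_zero]⟩ : T)) := by
    constructor
    · rintro ⟨a, x, hx⟩ ⟨b, y, hy⟩ hab
      have hab' : (a : F) • x.rep = (b : F) • y.rep := congrArg Subtype.val hab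
      have hxy : x = y := by
        have h1 : Projectivization.mk F ((a : F) • x.rep)
            (smul_ne_zero a.ne_zero (Projectivization.rep_nonzero _)) = x := by
          conv_rhs => rw [← Projectivization.mk_rep x]
          rw [Projectivization.mk_eq_mk_iff]
          exact ⟨a, rfl⟩
        have h2 : Projectivization.mk F ((b : F) • y.rep)
            (smul_ne_zero b.ne_zero (Projectivization.rep_nonzero _)) = y := by
          conv_rhs => rw [← Projectivization.mk_rep y]
          rw [Projectivization.mk_eq_mk_iff]
          exact ⟨b, rfl⟩
        rw [← h1, ← h2]
        congr 1
      subst hxy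
      obtain ⟨i, hi⟩ := Function.ne_iff.mp (Projectivization.rep_nonzero x)
      have : (a : F) * x.rep i = (b : F) * x.rep i := congrFun hab' i
      have hab2 : (a : F) = b := mul_right_cancel₀ hi this
      simp [Prod.ext_iff, Units.ext_iff, hab2]
    · rintro ⟨u, hu0, huP⟩
      obtain ⟨a, ha⟩ := Projectivization.exists_smul_eq_mk_rep F u hu0
      have hx : Projectivization.mk F u hu0 ∈ S := by
        show eval (Projectivization.mk F u hu0).rep P = 0
        rw [← ha, Units.smul_def, eval_smul_homog hd, huP, mul_zero]
      refine ⟨⟨a⁻¹, ⟨Projectivization.mk F u hu0, hx⟩⟩, ?_⟩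
      apply Subtype.ext
      show ((a⁻¹ : Fˣ) : F) • (Projectivization.mk F u hu0).rep = u
      rw [← ha, Units.smul_def, smul_smul]
      simp
  have hcardT : (Fintype.card F - 1) * S.ncard = T.ncard := by
    have h := Nat.card_congr (Equiv.ofBijective _ hfb)
    rwa [Nat.card_prod, Nat.card_eq_fintype_card, Fintype.card_units,
      Nat.card_coe_set_eq, Nat.card_coe_set_eq] at h
  -- Step 2 : T.ncard ≤ (q - 1) * (d * (q + 1))
  have hstep2 : T.ncard ≤ (Fintype.card F - 1) * (d * (Fintype.card F + 1)) := by
    rw [hT]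
    exact affine_bound F P hP d hd
  rw [← hcardT] at hstep2
  exact Nat.le_of_mul_le_mul_left hstep2 (Nat.sub_pos_of_lt hq2)
end

section
/- The plane curve over F_3 cut out by the homogeneous polynomial x^3 y + y^3 z + z^3 x is flexy: at every smooth point, the tangent line meets the curve with intersection multiplicity at least 3. -/
set_option maxHeartbeats 1000000


open MvPolynomial

theorem funny_aux (R : Type) [CommRing R] [CharP R 3]
    (a0 a1 a2 b0 b1 b2 : R)
    (h0 : a0 ^ 3 * a1 + a1 ^ 3 * a2 + a2 ^ 3 * a0 = 0)
    (ht : b0 * a2 ^ 3 + b1 * a0 ^ 3 + b2 * a1 ^ 3 = 0) :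
    (Polynomial.C a0 + Polynomial.X * Polynomial.C b0) ^ 3 *
        (Polynomial.C a1 + Polynomial.X * Polynomial.C b1) +
      (Polynomial.C a1 + Polynomial.X * Polynomial.C b1) ^ 3 *
        (Polynomial.C a2 + Polynomial.X * Polynomial.C b2) +
      (Polynomial.C a2 + Polynomial.X * Polynomial.C b2) ^ 3 *
        (Polynomial.C a0 + Polynomial.X * Polynomial.C b0) =
      Polynomial.X ^ 3 *
        (Polynomial.C (b0 ^ 3 * a1 + b1 ^ 3 * a2 + b2 ^ 3 * a0) +
          Polynomial.X * Polynomial.C (b0 ^ 3 * b1 + b1 ^ 3 * b2 + b2 ^ 3 * b0)) := by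
  haveI : Fact (Nat.Prime 3) := ⟨by norm_num⟩
  have hcube : ∀ x y : Polynomial R, (x + y) ^ 3 = x ^ 3 + y ^ 3 := fun x y =>
    add_pow_char x y 3
  rw [hcube, hcube, hcube]
  have hc0 := congrArg Polynomial.C h0
  have hct := congrArg Polynomial.C ht
  simp only [map_add, map_mul, map_pow, map_zero] at hc0 hct ⊢
  linear_combination hc0 + Polynomial.X * hct

/-- The "funny curve" `x^3 y + y^3 z + z^3 x = 0` over (the algebraic closure of)
`F_3` is flexy: at every smooth point, the tangent line meets the curve with
intersection multiplicity at least 3. Smooth points are nonzero vectors `v` on the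
curve with nonvanishing gradient; tangent directions are `w` with `∇F(v)·w = 0`, and
the multiplicity is the order of vanishing at `t = 0` of `t ↦ F(v + t w)`. -/
theorem funny_curve_flexy :
    ∀ v w : Fin 3 → AlgebraicClosure (ZMod 3),
      (eval v (X 0 ^ 3 * X 1 + X 1 ^ 3 * X 2 + X 2 ^ 3 * X 0 :
          MvPolynomial (Fin 3) (AlgebraicClosure (ZMod 3))) = 0) →
      (∃ i, eval v (pderiv i (X 0 ^ 3 * X 1 + X 1 ^ 3 * X 2 + X 2 ^ 3 * X 0)) ≠ 0) →
      w ≠ 0 →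
      (∑ i, w i * eval v (pderiv i (X 0 ^ 3 * X 1 + X 1 ^ 3 * X 2 + X 2 ^ 3 * X 0)) = 0) →
      (aeval (fun i => Polynomial.C (v i) + Polynomial.X * Polynomial.C (w i))
          (X 0 ^ 3 * X 1 + X 1 ^ 3 * X 2 + X 2 ^ 3 * X 0 :
            MvPolynomial (Fin 3) (AlgebraicClosure (ZMod 3))) = 0) ∨
        3 ≤ Polynomial.rootMultiplicity 0
          (aeval (fun i => Polynomial.C (v i) + Polynomial.X * Polynomial.C (w i))
            (X 0 ^ 3 * X 1 + X 1 ^ 3 * X 2 + X 2 ^ 3 * X 0 :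
              MvPolynomial (Fin 3) (AlgebraicClosure (ZMod 3)))) := by
  intro v w h0 _hsm _hw ht
  simp [Fin.sum_univ_three] at h0 ht
  have h3 : (3 : AlgebraicClosure (ZMod 3)) = 0 := by
    simpa using CharP.cast_eq_zero (AlgebraicClosure (ZMod 3)) 3
  have ht' : w 0 * v 2 ^ 3 + w 1 * v 0 ^ 3 + w 2 * v 1 ^ 3 = 0 := by
    linear_combination ht -
      (w 0 * v 1 * v 0 ^ 2 + w 1 * v 2 * v 1 ^ 2 + w 2 * v 0 * v 2 ^ 2) * h3
  set p : Polynomial (AlgebraicClosure (ZMod 3)) :=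
    (Polynomial.C (v 0) + Polynomial.X * Polynomial.C (w 0)) ^ 3 *
        (Polynomial.C (v 1) + Polynomial.X * Polynomial.C (w 1)) +
      (Polynomial.C (v 1) + Polynomial.X * Polynomial.C (w 1)) ^ 3 *
        (Polynomial.C (v 2) + Polynomial.X * Polynomial.C (w 2)) +
      (Polynomial.C (v 2) + Polynomial.X * Polynomial.C (w 2)) ^ 3 *
        (Polynomial.C (v 0) + Polynomial.X * Polynomial.C (w 0)) with hpdef
  have hgoal : (aeval (fun i => Polynomial.C (v i) + Polynomial.X * Polynomial.C (w i))
      (X 0 ^ 3 * X 1 + X 1 ^ 3 * X 2 + X 2 ^ 3 * X 0 :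
        MvPolynomial (Fin 3) (AlgebraicClosure (ZMod 3)))) = p := by
    simp only [map_add, map_mul, map_pow, aeval_X, hpdef]
  have hfac : p = Polynomial.X ^ 3 *
      (Polynomial.C (w 0 ^ 3 * v 1 + w 1 ^ 3 * v 2 + w 2 ^ 3 * v 0) +
        Polynomial.X * Polynomial.C (w 0 ^ 3 * w 1 + w 1 ^ 3 * w 2 + w 2 ^ 3 * w 0)) := by
    rw [hpdef]
    exact funny_aux _ (v 0) (v 1) (v 2) (w 0) (w 1) (w 2) h0 ht'
  rw [hgoal]
  by_cases hpz : p = 0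
  · exact Or.inl hpz
  · refine Or.inr ((Polynomial.le_rootMultiplicity_iff hpz).2 ?_)
    rw [hfac]
    simp only [map_zero, sub_zero]; exact Dvd.intro _ rfl
end
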